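/- Consider the 2n-player, 2-action game consisting of n disjoint pairs of players, each pair playing matching pennies (the actions of a pair do not influence the payoffs of other pairs), and let x be the Nash equilibrium in which every player plays (1/2, 1/2). If the number of samples satisfies 1 ≤ k ≤ (log₂ n)/2, then the probability (over k i.i.d. samples from x) that the product empirical distribution of play is a 1/4-coarse correlated equilibrium is at most (1 − 1/√n)^{2n}. In particular: (a) each player's empirical distribution is a pure strategy with probability 2·(1/2)^k ≥ 1/√n; (b) if any player's empirical distribution is pure, the product empirical distribution of play is not a 1/4-coarse correlated equilibrium. -/

import Mathlib

open Finset

open scoped Classical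

noncomputable section

/-- Probability of the pure action profile `a` under the product distribution `x`
(players indexed by an arbitrary finite type `P`). -/
def prodProb {P : Type*} [Fintype P] {m : ℕ} (x : P → Fin m → ℝ) (a : P → Fin m) : ℝ :=
  ∏ p, x p (a p)

/-- Probability of the event `E` over `k` i.i.d. samples from the product
distribution `x`. -/
def PrProd {P : Type*} [Fintype P] {m : ℕ} (k : ℕ) (x : P → Fin m → ℝ)
    (E : (Fin k → P → Fin m) → Prop) : ℝ :=
  ∑ a : Fin k → P → Fin m, if E a then ∏ t, prodProb x (a t) else 0

/-- Empirical distribution of player `p` from `k` sampled action profiles. -/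
def emp {P : Type*} {m : ℕ} (k : ℕ) (a : Fin k → P → Fin m) (p : P) : Fin m → ℝ :=
  fun b => ((univ.filter fun t => a t p = b).card : ℝ) / k

/-- `x ∈ Δ(A)` is an `ε`-coarse correlated equilibrium of the game `u`. -/
def IsCCE {P : Type*} [Fintype P] [DecidableEq P] {m : ℕ}
    (u : P → (P → Fin m) → ℝ) (x : (P → Fin m) → ℝ) (ε : ℝ) : Prop :=
  ∀ (p : P) (j : Fin m),
    ∑ a : P → Fin m, x a * (u p (Function.update a p j) - u p a) ≤ ε

/-- The `2n`-player, `2`-action game made of `n` disjoint matching-pennies pairs: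
player `(i, false)` gets `1` iff the two members of pair `i` play the same action,
and player `(i, true)` gets `1` iff they play different actions. -/
def mpGame (n : ℕ) : (Fin n × Bool) → ((Fin n × Bool) → Fin 2) → ℝ :=
  fun p a =>
    if p.2 = false then (if a (p.1, false) = a (p.1, true) then 1 else 0)
    else (if a (p.1, false) = a (p.1, true) then 0 else 1)

lemma sum_pi_prod {P B : Type*} [Fintype P] [DecidableEq P] [Fintype B] (f : P → B → ℝ) :
    ∑ c : P → B, ∏ r, f r (c r) = ∏ r, ∑ b, f r b := by
  rw [Finset.prod_univ_sum, Fintype.piFinset_univ]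

lemma prod_two_exc {P : Type*} [Fintype P] [DecidableEq P] {p q : P} (hpq : p ≠ q)
    (F : P → ℝ) (hF : ∀ r, r ≠ p → r ≠ q → F r = 1) :
    ∏ r, F r = F p * F q := by
  rw [← Finset.prod_pair hpq]
  refine (Finset.prod_subset (Finset.subset_univ _) ?_).symm
  intro r _ hr
  simp only [Finset.mem_insert, Finset.mem_singleton] at hr
  push_neg at hr
  exact hF r hr.1 hr.2

lemma marg {P : Type*} [Fintype P] [DecidableEq P] (w : P → Fin 2 → ℝ)
    (hw : ∀ r, ∑ b, w r b = 1) (p q : P) (hpq : p ≠ q) (g : Fin 2 → Fin 2 → ℝ) :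
    ∑ c : P → Fin 2, prodProb w c * g (c p) (c q)
      = ∑ b : Fin 2, ∑ b' : Fin 2, w p b * w q b' * g b b' := by
  classical
  set f : Fin 2 → Fin 2 → P → Fin 2 → ℝ := fun b b' r β =>
    (if r = p then (if β = b then (1:ℝ) else 0) else
     if r = q then (if β = b' then 1 else 0) else 1) * w r β with hf
  have key : ∀ b b' : Fin 2,
      (∑ c : P → Fin 2, (if c p = b then (1:ℝ) else 0) * (if c q = b' then 1 else 0) * prodProb w c)
        = w p b * w q b' := by
    intro b b'
    have hrw : ∀ c : P → Fin 2,
        (if c p = b then (1:ℝ) else 0) * (if c q = b' then 1 else 0) * prodProb w c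
          = ∏ r, f b b' r (c r) := by
      intro c
      simp only [hf]
      rw [Finset.prod_mul_distrib]
      rw [prod_two_exc hpq _ (fun r h1 h2 => by simp [h1, h2])]
      unfold prodProb
      simp [hpq, hpq.symm]
    rw [Finset.sum_congr rfl fun c _ => hrw c, sum_pi_prod]
    rw [prod_two_exc hpq _ (fun r h1 h2 => by
      simp only [hf, h1, h2, if_false]
      simpa using hw r)]
    simp [hf, hpq, hpq.symm, Finset.sum_ite_eq']
  have expand : ∀ c : P → Fin 2, g (c p) (c q) =
      ∑ b : Fin 2, ∑ b' : Fin 2, (if c p = b then (1:ℝ) else 0) * (if c q = b' then 1 else 0) * g b b' := by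
    intro c
    have h2 : ∀ β : Fin 2, β = 0 ∨ β = 1 := by decide
    rcases h2 (c p) with h | h <;> rcases h2 (c q) with h' | h' <;>
      simp [h, h', Fin.sum_univ_two]
  calc ∑ c : P → Fin 2, prodProb w c * g (c p) (c q)
      = ∑ c : P → Fin 2, ∑ b : Fin 2, ∑ b' : Fin 2,
          (if c p = b then (1:ℝ) else 0) * (if c q = b' then 1 else 0) * prodProb w c * g b b' := by
        refine Finset.sum_congr rfl fun c _ => ?_
        rw [expand c, Finset.mul_sum]
        refine Finset.sum_congr rfl fun b _ => ?_
        rw [Finset.mul_sum]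
        exact Finset.sum_congr rfl fun b' _ => by ring
    _ = ∑ b : Fin 2, ∑ b' : Fin 2, (∑ c : P → Fin 2,
          (if c p = b then (1:ℝ) else 0) * (if c q = b' then 1 else 0) * prodProb w c) * g b b' := by
        rw [Finset.sum_comm]
        refine Finset.sum_congr rfl fun b _ => ?_
        rw [Finset.sum_comm]
        exact Finset.sum_congr rfl fun b' _ => (Finset.sum_mul _ _ _).symm
    _ = ∑ b : Fin 2, ∑ b' : Fin 2, w p b * w q b' * g b b' := by
        exact Finset.sum_congr rfl fun b _ => Finset.sum_congr rfl fun b' _ => by rw [key b b']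

lemma ite_irrel (c : Prop) (i1 i2 : Decidable c) (x : ℝ) :
    @ite ℝ c i1 x 0 = @ite ℝ c i2 x 0 := by
  cases Subsingleton.elim i1 i2; rfl

lemma sum_fintype_irrel {α : Type*} (i1 i2 : Fintype α) (f : α → ℝ) :
    @Finset.sum α ℝ _ (@Finset.univ α i1) f = @Finset.sum α ℝ _ (@Finset.univ α i2) f := by
  cases Subsingleton.elim i1 i2; rfl

lemma sum_pi_prod' {P B : Type*} [Fintype P] [DecidableEq P] [Fintype B] (f : P → B → ℝ) :
    ∑ c : P → B, ∏ r, f r (c r) = ∏ r, ∑ b, f r b := by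
  rw [Finset.prod_univ_sum, Fintype.piFinset_univ]

set_option maxHeartbeats 1000000 in
lemma factor {P : Type*} [Fintype P] [DecidableEq P] (k : ℕ)
    (F : P → (Fin k → Fin 2) → Prop) :
    PrProd k (fun (_ : P) (_ : Fin 2) => (1:ℝ)/2) (fun a => ∀ p, F p (fun t => a t p))
      = ∏ p, ∑ s : Fin k → Fin 2, if F p s then ((1:ℝ)/2) ^ k else 0 := by
  unfold PrProd
  have h1 : ∀ a : Fin k → P → Fin 2,
      (∏ t, prodProb (fun (_ : P) (_ : Fin 2) => (1:ℝ)/2) (a t)) = ∏ _p : P, ((1:ℝ)/2) ^ k := by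
    intro a
    simp [prodProb, Finset.prod_const]
    ring
  have h2 : ∀ a : Fin k → P → Fin 2,
      (if (∀ p, F p (fun t => a t p)) then ∏ t, prodProb (fun (_ : P) (_ : Fin 2) => (1:ℝ)/2) (a t) else 0)
        = ∏ p, (if F p (fun t => a t p) then ((1:ℝ)/2) ^ k else 0) := by
    intro a
    rw [h1 a]
    by_cases h : ∀ p, F p (fun t => a t p)
    · rw [if_pos h]
      exact (Finset.prod_congr rfl fun p _ => by rw [if_pos (h p)]).symm
    · rw [if_neg h]
      push_neg at h
      obtain ⟨p0, hp0⟩ := h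
      exact (Finset.prod_eq_zero (Finset.mem_univ p0) (by rw [if_neg hp0])).symm
  have hsub : ∀ (c : Prop) (i1 i2 : Decidable c) (x : ℝ), @ite ℝ c i1 x 0 = @ite ℝ c i2 x 0 := by
    intro c i1 i2 x
    cases Subsingleton.elim i1 i2
    rfl
  refine Eq.trans (Finset.sum_congr rfl fun a _ => Eq.trans (hsub _ _ _ _) (h2 a)) ?_
  rw [← sum_pi_prod' (fun p s => if F p s then ((1:ℝ)/2) ^ k else 0)]
  refine Eq.trans (sum_fintype_irrel _ inferInstance _) (Eq.trans ?_ (sum_fintype_irrel inferInstance _ _))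
  exact Fintype.sum_equiv (Equiv.piComm (fun _ _ => Fin 2)) _ _ (fun a => rfl)

def IsConst (k : ℕ) (s : Fin k → Fin 2) : Prop := (∀ t, s t = 0) ∨ (∀ t, s t = 1)

lemma q_total (k : ℕ) : ∑ _s : Fin k → Fin 2, ((1:ℝ)/2) ^ k = 1 := by
  rw [Finset.sum_const, Finset.card_univ, Fintype.card_fun, Fintype.card_fin, Fintype.card_fin,
    nsmul_eq_mul]
  push_cast
  rw [div_pow]
  field_simp
  simp

lemma q_const (k : ℕ) (hk : 1 ≤ k) :
    ∑ s : Fin k → Fin 2, (if IsConst k s then ((1:ℝ)/2) ^ k else 0) = 2 * (1/2) ^ k := by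
  rw [← Finset.sum_filter]
  have hfil : (univ.filter fun s : Fin k → Fin 2 => IsConst k s)
      = {fun _ => 0, fun _ => 1} := by
    ext s
    rw [Finset.mem_filter]
    simp [IsConst, funext_iff]
  have hne : (fun _ : Fin k => (0 : Fin 2)) ≠ (fun _ => 1) := by
    intro h
    exact absurd (congrFun h ⟨0, hk⟩) (by decide)
  rw [hfil, Finset.sum_pair hne]
  ring

lemma q_not_const (k : ℕ) (hk : 1 ≤ k) :
    ∑ s : Fin k → Fin 2, (if ¬ IsConst k s then ((1:ℝ)/2) ^ k else 0) = 1 - 2 * (1/2) ^ k := by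
  have hadd : (∑ s : Fin k → Fin 2, (if IsConst k s then ((1:ℝ)/2) ^ k else 0))
      + ∑ s : Fin k → Fin 2, (if ¬ IsConst k s then ((1:ℝ)/2) ^ k else 0)
      = ∑ _s : Fin k → Fin 2, ((1:ℝ)/2) ^ k := by
    rw [← Finset.sum_add_distrib]
    refine Finset.sum_congr rfl fun s _ => ?_
    by_cases h : IsConst k s <;> simp [h]
  rw [q_total, q_const k hk] at hadd
  linarith

lemma pure_iff {P : Type*} {k : ℕ} (hk : 1 ≤ k) (a : Fin k → P → Fin 2) (p : P) :
    (∃ b : Fin 2, emp k a p b = 1) ↔ IsConst k (fun t => a t p) := by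
  have hk0 : (k : ℝ) ≠ 0 := by positivity
  have hcard : ∀ b : Fin 2, emp k a p b = 1 ↔ ∀ t, a t p = b := by
    intro b
    unfold emp
    rw [div_eq_one_iff_eq hk0]
    constructor
    · intro h
      have hcc : (univ.filter fun t => a t p = b).card = k := by exact_mod_cast h
      have : (univ.filter fun t => a t p = b) = univ :=
        Finset.eq_of_subset_of_card_le (Finset.subset_univ _)
          (by rw [hcc, Finset.card_univ, Fintype.card_fin])
      intro t
      have := Finset.mem_filter.mp (this ▸ Finset.mem_univ t)
      exact this.2
    · intro h
      rw [Finset.filter_true_of_mem fun t _ => h t, Finset.card_univ, Fintype.card_fin]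
  constructor
  · rintro ⟨b, hb⟩
    have h2 : b = 0 ∨ b = 1 := by
      have : ∀ β : Fin 2, β = 0 ∨ β = 1 := by decide
      exact this b
    rcases h2 with h | h
    · exact Or.inl (h ▸ (hcard b).mp hb)
    · exact Or.inr (h ▸ (hcard b).mp hb)
  · rintro (h | h)
    · exact ⟨0, (hcard 0).mpr h⟩
    · exact ⟨1, (hcard 1).mpr h⟩

lemma PrProd_congr {P : Type*} [Fintype P] {m k : ℕ} (x : P → Fin m → ℝ)
    {E E' : (Fin k → P → Fin m) → Prop} (h : ∀ a, E a ↔ E' a) :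
    PrProd k x E = PrProd k x E' :=
  Finset.sum_congr rfl fun a _ => if_congr (h a) rfl rfl

lemma PrProd_mono {P : Type*} [Fintype P] {m k : ℕ} (x : P → Fin m → ℝ)
    (hx : ∀ p b, 0 ≤ x p b) {E E' : (Fin k → P → Fin m) → Prop} (h : ∀ a, E a → E' a) :
    PrProd k x E ≤ PrProd k x E' := by
  refine Finset.sum_le_sum fun a _ => ?_
  have hP : 0 ≤ ∏ t, prodProb x (a t) :=
    Finset.prod_nonneg fun t _ => Finset.prod_nonneg fun p _ => hx p (a t p)
  by_cases hE : E a
  · rw [if_pos hE, if_pos (h a hE)]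
  · rw [if_neg hE]
    by_cases hE' : E' a
    · rw [if_pos hE']; exact hP
    · rw [if_neg hE']

lemma emp_nonneg {P : Type*} {m k : ℕ} (a : Fin k → P → Fin m) (p : P) (b : Fin m) :
    0 ≤ emp k a p b := by
  unfold emp
  positivity

lemma emp_sum {P : Type*} {k : ℕ} (hk : 1 ≤ k) (a : Fin k → P → Fin 2) (p : P) :
    emp k a p 0 + emp k a p 1 = 1 := by
  unfold emp
  rw [← add_div, div_eq_one_iff_eq (by positivity)]
  rw [← Nat.cast_add]
  norm_cast
  have h10 : ∀ b : Fin 2, b = 1 ↔ ¬ b = 0 := by decide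
  have : (univ.filter fun t => a t p = 1) = (univ.filter fun t => ¬ (a t p = 0)) :=
    Finset.filter_congr fun t _ => h10 (a t p)
  rw [this, Finset.card_filter_add_card_filter_not, Finset.card_univ, Fintype.card_fin]

lemma noCCE (n k : ℕ) (hk : 1 ≤ k) (a : Fin k → (Fin n × Bool) → Fin 2)
    (p : Fin n × Bool) (b : Fin 2) (hpure : emp k a p b = 1) :
    ¬ IsCCE (mpGame n) (prodProb (emp k a)) (1/4) := by
  intro hCCE
  set w := emp k a with hw
  set i := p.1 with hi
  have hpq : ((i, false) : Fin n × Bool) ≠ (i, true) := by simp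
  have hsum : ∀ r, ∑ β : Fin 2, w r β = 1 := fun r => by
    rw [Fin.sum_univ_two]; exact emp_sum hk a r
  have hf : ∀ j : Fin 2, ∑ β : Fin 2, ∑ β' : Fin 2, w (i, false) β * w (i, true) β' *
      ((if j = β' then (1:ℝ) else 0) - (if β = β' then 1 else 0)) ≤ 1/4 := by
    intro j
    have h1 := hCCE (i, false) j
    have heq : ∀ c : (Fin n × Bool) → Fin 2,
        mpGame n (i, false) (Function.update c (i, false) j) - mpGame n (i, false) c
        = (if j = c (i, true) then (1:ℝ) else 0) - (if c (i, false) = c (i, true) then 1 else 0) := by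
      intro c
      simp [mpGame, Function.update]
    calc ∑ β : Fin 2, ∑ β' : Fin 2, w (i, false) β * w (i, true) β' *
          ((if j = β' then (1:ℝ) else 0) - (if β = β' then 1 else 0))
        = ∑ c : (Fin n × Bool) → Fin 2, prodProb w c *
            ((fun β β' => (if j = β' then (1:ℝ) else 0) - (if β = β' then 1 else 0)) (c (i, false)) (c (i, true))) :=
          (marg w hsum (i, false) (i, true) hpq _).symm
      _ = ∑ c : (Fin n × Bool) → Fin 2, prodProb w c *
            (mpGame n (i, false) (Function.update c (i, false) j) - mpGame n (i, false) c) :=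
          Finset.sum_congr rfl fun c _ => by rw [heq c]
      _ ≤ 1/4 := h1
  have ht : ∀ j : Fin 2, ∑ β : Fin 2, ∑ β' : Fin 2, w (i, false) β * w (i, true) β' *
      ((if β = j then (0:ℝ) else 1) - (if β = β' then 0 else 1)) ≤ 1/4 := by
    intro j
    have h1 := hCCE (i, true) j
    have heq : ∀ c : (Fin n × Bool) → Fin 2,
        mpGame n (i, true) (Function.update c (i, true) j) - mpGame n (i, true) c
        = (if c (i, false) = j then (0:ℝ) else 1) - (if c (i, false) = c (i, true) then 0 else 1) := by
      intro c
      simp [mpGame, Function.update]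
    calc ∑ β : Fin 2, ∑ β' : Fin 2, w (i, false) β * w (i, true) β' *
          ((if β = j then (0:ℝ) else 1) - (if β = β' then 0 else 1))
        = ∑ c : (Fin n × Bool) → Fin 2, prodProb w c *
            ((fun β β' => (if β = j then (0:ℝ) else 1) - (if β = β' then 0 else 1)) (c (i, false)) (c (i, true))) :=
          (marg w hsum (i, false) (i, true) hpq _).symm
      _ = ∑ c : (Fin n × Bool) → Fin 2, prodProb w c *
            (mpGame n (i, true) (Function.update c (i, true) j) - mpGame n (i, true) c) :=
          Finset.sum_congr rfl fun c _ => by rw [heq c]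
      _ ≤ 1/4 := h1
  have hf0 := hf 0
  have hf1 := hf 1
  have ht0 := ht 0
  have ht1 := ht 1
  simp only [Fin.sum_univ_two] at hf0 hf1 ht0 ht1
  norm_num at hf0 hf1 ht0 ht1
  have hsf := emp_sum hk a (i, false)
  have hst := emp_sum hk a (i, true)
  have n00 := emp_nonneg a (i, false) (0 : Fin 2)
  have n01 := emp_nonneg a (i, false) (1 : Fin 2)
  have n10 := emp_nonneg a (i, true) (0 : Fin 2)
  have n11 := emp_nonneg a (i, true) (1 : Fin 2)
  rw [← hw] at hsf hst n00 n01 n10 n11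
  have h2 : ∀ β : Fin 2, β = 0 ∨ β = 1 := by decide
  have hp : p = (i, false) ∨ p = (i, true) := by
    rcases p with ⟨i', β⟩
    cases β
    · left; rfl
    · right; rfl
  rcases hp with hp | hp <;> rcases h2 b with hb | hb <;>
    rw [hp, hb] at hpure <;>
    nlinarith [hpure, hf0, hf1, ht0, ht1, hsf, hst, n00, n01, n10, n11]

/-- In the `2n`-player game of `n` disjoint matching-pennies pairs,
let `x` be the Nash equilibrium where every player plays `(1/2, 1/2)`.  If
`1 ≤ k ≤ (log₂ n)/2`, then the probability over `k` i.i.d. samples from `x` that the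
product empirical distribution of play is a `1/4`-coarse correlated equilibrium is at
most `(1 − 1/√n)^{2n}`.  Moreover: (a) each player's empirical distribution is a pure
strategy with probability `2·(1/2)^k ≥ 1/√n`; (b) if some player's empirical
distribution is pure, the product empirical distribution of play is not a
`1/4`-coarse correlated equilibrium. -/
theorem stmt14 (n : ℕ) (hn : 0 < n) (k : ℕ) (hk1 : 1 ≤ k)
    (hk2 : (k : ℝ) ≤ Real.logb 2 n / 2) :
    PrProd k (fun (_ : Fin n × Bool) (_ : Fin 2) => (1 : ℝ) / 2)
        (fun a => IsCCE (mpGame n) (prodProb (emp k a)) (1 / 4))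
      ≤ (1 - 1 / Real.sqrt n) ^ (2 * n)
    ∧ (∀ p : Fin n × Bool,
        PrProd k (fun (_ : Fin n × Bool) (_ : Fin 2) => (1 : ℝ) / 2)
            (fun a => ∃ b : Fin 2, emp k a p b = 1)
          = 2 * (1 / 2 : ℝ) ^ k
        ∧ (1 / Real.sqrt n : ℝ) ≤ 2 * (1 / 2 : ℝ) ^ k)
    ∧ (∀ a : Fin k → (Fin n × Bool) → Fin 2,
        (∃ (p : Fin n × Bool) (b : Fin 2), emp k a p b = 1) →
        ¬ IsCCE (mpGame n) (prodProb (emp k a)) (1 / 4)) := by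
  have hn1 : (1:ℝ) ≤ (n:ℝ) := by exact_mod_cast hn
  have hs_pos : 0 < Real.sqrt n := Real.sqrt_pos.mpr (by positivity)
  have hsqrt : (1 / Real.sqrt n : ℝ) ≤ 2 * (1 / 2 : ℝ) ^ k := by
    have h2k : (2:ℝ) ^ k ≤ Real.sqrt n := by
      have h1 : ((2:ℝ) ^ k : ℝ) = (2:ℝ) ^ (k:ℝ) := (Real.rpow_natCast 2 k).symm
      have h2 : (2:ℝ) ^ (k:ℝ) ≤ (2:ℝ) ^ (Real.logb 2 n / 2) :=
        Real.rpow_le_rpow_of_exponent_le (by norm_num) hk2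
      have h3 : (2:ℝ) ^ (Real.logb 2 n / 2) = Real.sqrt n := by
        rw [div_eq_mul_inv, Real.rpow_mul (by norm_num),
          Real.rpow_logb (by norm_num) (by norm_num) (by positivity), Real.sqrt_eq_rpow]
        norm_num
      rw [h1]
      rw [h3] at h2
      exact h2
    have hpk : (0:ℝ) < (2:ℝ) ^ k := by positivity
    have h4 : (1:ℝ) / Real.sqrt n ≤ 1 / (2:ℝ) ^ k := one_div_le_one_div_of_le hpk h2k
    have h5 : ((1:ℝ)/2) ^ k = 1 / (2:ℝ) ^ k := by rw [div_pow, one_pow]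
    nlinarith [pow_nonneg (by norm_num : (0:ℝ) ≤ 1/2) k]
  have hpow_le : (1:ℝ)/2 * 2 = 1 := by norm_num
  have hk_half : ((1:ℝ)/2) ^ k ≤ 1/2 := by
    calc ((1:ℝ)/2) ^ k ≤ ((1:ℝ)/2) ^ 1 := pow_le_pow_of_le_one (by norm_num) (by norm_num) hk1
      _ = 1/2 := pow_one _
  -- part (a)
  have parta : ∀ p : Fin n × Bool,
      PrProd k (fun (_ : Fin n × Bool) (_ : Fin 2) => (1 : ℝ) / 2)
          (fun a => ∃ b : Fin 2, emp k a p b = 1) = 2 * (1 / 2 : ℝ) ^ k := by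
    intro p
    calc PrProd k (fun (_ : Fin n × Bool) (_ : Fin 2) => (1 : ℝ) / 2)
          (fun a => ∃ b : Fin 2, emp k a p b = 1)
        = PrProd k (fun (_ : Fin n × Bool) (_ : Fin 2) => (1 : ℝ) / 2)
            (fun a => ∀ p', (fun p' s => p' = p → IsConst k s) p' (fun t => a t p')) := by
          refine PrProd_congr _ fun a => ?_
          rw [pure_iff hk1 a p]
          constructor
          · intro h p' hp'
            rw [hp']
            exact h
          · intro h
            exact h p rfl
      _ = ∏ p', ∑ s : Fin k → Fin 2, if (p' = p → IsConst k s) then ((1:ℝ)/2) ^ k else 0 :=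
          Eq.trans (factor k (fun p' s => p' = p → IsConst k s))
            (Finset.prod_congr rfl fun p' _ => Finset.sum_congr rfl fun s _ => ite_irrel _ _ _ _)
      _ = 2 * (1 / 2 : ℝ) ^ k := by
          rw [Finset.prod_eq_single p
            (fun p' _ hp' => by
              rw [Finset.sum_congr rfl fun s _ => if_pos (fun h => absurd h hp')]
              exact q_total k)
            (fun h => absurd (Finset.mem_univ p) h)]
          rw [Finset.sum_congr rfl fun s (_ : s ∈ univ) =>
            if_congr (show (p = p → IsConst k s) ↔ IsConst k s by simp) rfl rfl]
          exact (Finset.sum_congr rfl fun s _ => ite_irrel _ _ _ _).trans (q_const k hk1)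
  refine ⟨?_, fun p => ⟨parta p, hsqrt⟩, fun a ⟨p, b, hb⟩ => noCCE n k hk1 a p b hb⟩
  calc PrProd k (fun (_ : Fin n × Bool) (_ : Fin 2) => (1 : ℝ) / 2)
        (fun a => IsCCE (mpGame n) (prodProb (emp k a)) (1 / 4))
      ≤ PrProd k (fun (_ : Fin n × Bool) (_ : Fin 2) => (1 : ℝ) / 2)
          (fun a => ∀ p', (fun p' s => ¬ IsConst k s) p' (fun t => a t p')) := by
        refine PrProd_mono _ (fun _ _ => by norm_num) fun a hCCE p' hC => ?_
        obtain ⟨b, hb⟩ := (pure_iff hk1 a p').mpr hC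
        exact noCCE n k hk1 a p' b hb hCCE
    _ = ∏ _p' : Fin n × Bool, (1 - 2 * ((1:ℝ)/2) ^ k) := by
        rw [factor k (fun p' s => ¬ IsConst k s)]
        exact Finset.prod_congr rfl fun p' _ =>
          (Finset.sum_congr rfl fun s _ => ite_irrel _ _ _ _).trans (q_not_const k hk1)
    _ = (1 - 2 * ((1:ℝ)/2) ^ k) ^ (2 * n) := by
        rw [Finset.prod_const, Finset.card_univ, Fintype.card_prod, Fintype.card_fin,
          Fintype.card_bool, mul_comm n 2]
    _ ≤ (1 - 1 / Real.sqrt n) ^ (2 * n) := by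
        refine pow_le_pow_left₀ (by linarith) (by linarith) _
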